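/- Under the setup of the univariate objective G(r) = Σ_k [α·log(v_k·r + α) − η_k²·r/(v_k·r + α)], if α ≥ max_k (η_k²/v_k) then G is monotone nondecreasing on [0, ∞), so r = 0 is a global minimizer of G on [0, ∞). -/
import Mathlib


/-- If `α ≥ η_k²/v_k` for every `k`, then
`G(r) = Σ_k [α·log(v_k·r + α) − η_k²·r/(v_k·r + α)]` is monotone nondecreasing
on `[0, ∞)`, so `r = 0` is a global minimizer of `G` on `[0, ∞)`. -/
theorem stmt_5 (d : ℕ) (hd : 0 < d) (α : ℝ) (hα : 0 < α)
    (v η : Fin d → ℝ) (hv : ∀ k, 0 < v k) (h : ∀ k, (η k) ^ 2 / v k ≤ α) :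
    MonotoneOn (fun r : ℝ =>
        ∑ k, (α * Real.log (v k * r + α) - (η k) ^ 2 * r / (v k * r + α)))
      (Set.Ici 0) ∧
    IsMinOn (fun r : ℝ =>
        ∑ k, (α * Real.log (v k * r + α) - (η k) ^ 2 * r / (v k * r + α)))
      (Set.Ici 0) 0 := by
  have hmono : MonotoneOn (fun r : ℝ =>
      ∑ k, (α * Real.log (v k * r + α) - (η k) ^ 2 * r / (v k * r + α)))
      (Set.Ici 0) := by
    intro r1 hr1 r2 hr2 h12
    simp only [Set.mem_Ici] at hr1 hr2
    apply Finset.sum_le_sum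
    intro k _
    have hvk := hv k
    have hη : (η k) ^ 2 ≤ α * v k := by
      have := (div_le_iff₀ hvk).mp (h k)
      linarith
    have ha0 : (0:ℝ) < v k * r1 + α := by positivity
    have hb0 : (0:ℝ) < v k * r2 + α := by positivity
    have hab : v k * r1 + α ≤ v k * r2 + α := by nlinarith
    set a := v k * r1 + α with ha
    set b := v k * r2 + α with hb
    -- log inequality: log(a/b) ≤ a/b - 1, so log b - log a ≥ (b-a)/b
    have hlog : Real.log a - Real.log b ≤ a / b - 1 := by
      have h1 : Real.log (a / b) ≤ a / b - 1 :=
        Real.log_le_sub_one_of_pos (by positivity)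
      rwa [Real.log_div ha0.ne' hb0.ne'] at h1
    have hL : α * ((b - a) / b) ≤ α * (Real.log b - Real.log a) := by
      apply mul_le_mul_of_nonneg_left _ hα.le
      have : 1 - a / b = (b - a) / b := by field_simp
      linarith
    have key : (η k) ^ 2 * r2 / b - (η k) ^ 2 * r1 / a ≤ α * ((b - a) / b) := by
      rw [div_sub_div _ _ hb0.ne' ha0.ne', mul_div_assoc', div_le_div_iff₀ (by positivity) hb0]
      have e1 : (η k) ^ 2 * r2 * a - b * ((η k) ^ 2 * r1) = (η k) ^ 2 * α * (r2 - r1) := by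
        rw [ha, hb]; ring
      have e2 : α * (b - a) = α * v k * (r2 - r1) := by rw [ha, hb]; ring
      rw [e1, e2]
      have h3 : (η k) ^ 2 * (r2 - r1) ≤ α * v k * (r2 - r1) :=
        mul_le_mul_of_nonneg_right hη (by linarith)
      have hαa : α ≤ a := by rw [ha]; nlinarith
      nlinarith [mul_le_mul_of_nonneg_right h3 hb0.le, sub_nonneg.mpr h12,
        mul_nonneg (mul_nonneg (mul_nonneg hα.le hvk.le) (sub_nonneg.mpr h12)) hb0.le]
    linarith
  refine ⟨hmono, ?_⟩
  intro r hr
  exact hmono (Set.self_mem_Ici) hr hr
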